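/- Let λ, μ : ℝ → ℝ be continuous functions with λ ≥ 0, let t > 0 and 0 ≤ z < 1. For s ∈ [0, t] define x(s) = 1 - ( exp(∫_{t-s}^t (μ(r) - λ(r)) dr)/(1 - z) + ∫_{t-s}^t λ(r) exp(∫_{t-s}^r (μ(u) - λ(u)) du) dr )^{-1}. Then x(0) = z and x solves the Riccati-type ordinary differential equation dx/ds = -λ(t-s) x(s)(1 - x(s)) + μ(t-s)(1 - x(s)) on [0, t]. -/

import Mathlib

open intervalIntegral

/-- The explicit solution of the Riccati-type characteristic ODE
`dx/ds = -λ(t-s)x(1-x) + μ(t-s)(1-x)` with `x(0) = z` for the generating function of a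
time-inhomogeneous birth–death process. -/
theorem stmt_6 (lam mu : ℝ → ℝ) (hlam : Continuous lam) (hmu : Continuous mu)
    (hlam0 : ∀ r, 0 ≤ lam r) (t : ℝ) (ht : 0 < t) (z : ℝ) (hz0 : 0 ≤ z) (hz1 : z < 1) :
    let x : ℝ → ℝ := fun s =>
      1 - (Real.exp (∫ r in (t - s)..t, (mu r - lam r)) / (1 - z)
        + ∫ r in (t - s)..t, lam r * Real.exp (∫ u in (t - s)..r, (mu u - lam u)))⁻¹
    x 0 = z ∧
      ∀ s ∈ Set.Icc (0 : ℝ) t,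
        HasDerivWithinAt x (-(lam (t - s)) * (x s * (1 - x s)) + mu (t - s) * (1 - x s))
          (Set.Icc (0 : ℝ) t) s := by
  intro x
  have hz1' : (0:ℝ) < 1 - z := by linarith
  set g : ℝ → ℝ := fun y => ∫ u in (0:ℝ)..y, (mu u - lam u) with hgdef
  have hml : Continuous fun u => mu u - lam u := hmu.sub hlam
  have hgd : ∀ y, HasDerivAt g (mu y - lam y) y := by
    intro y
    exact intervalIntegral.integral_hasDerivAt_right (hml.intervalIntegrable _ _)
      (hml.stronglyMeasurableAtFilter _ _) hml.continuousAt
  have hgc : Continuous g := by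
    rw [continuous_iff_continuousAt]; exact fun y => (hgd y).continuousAt
  have hint : ∀ a b, (∫ u in a..b, (mu u - lam u)) = g b - g a := by
    intro a b
    rw [hgdef]
    rw [← intervalIntegral.integral_interval_sub_left (hml.intervalIntegrable _ _)
      (hml.intervalIntegrable _ _)]
  have hcont2 : Continuous fun r => lam r * Real.exp (g r) :=
    hlam.mul (Real.continuous_exp.comp hgc)
  set G : ℝ → ℝ := fun y => ∫ r in (0:ℝ)..y, lam r * Real.exp (g r) with hGdef
  have hGd : ∀ y, HasDerivAt G (lam y * Real.exp (g y)) y := by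
    intro y
    exact intervalIntegral.integral_hasDerivAt_right (hcont2.intervalIntegrable _ _)
      (hcont2.stronglyMeasurableAtFilter _ _) hcont2.continuousAt
  have hGint : ∀ a b, (∫ r in a..b, lam r * Real.exp (g r)) = G b - G a := by
    intro a b
    rw [hGdef]
    rw [← intervalIntegral.integral_interval_sub_left (hcont2.intervalIntegrable _ _)
      (hcont2.intervalIntegrable _ _)]
  set F : ℝ → ℝ := fun s =>
    Real.exp (-(g (t - s))) * (Real.exp (g t) / (1 - z) + (G t - G (t - s))) with hFdef
  have hxF : ∀ s, x s = 1 - (F s)⁻¹ := by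
    intro s
    have h1 : (∫ r in (t - s)..t, lam r * Real.exp (∫ u in (t - s)..r, (mu u - lam u)))
        = Real.exp (-(g (t - s))) * (G t - G (t - s)) := by
      have : ∀ r, lam r * Real.exp (∫ u in (t - s)..r, (mu u - lam u))
          = Real.exp (-(g (t - s))) * (lam r * Real.exp (g r)) := by
        intro r
        rw [hint, Real.exp_sub, Real.exp_neg]
        ring
      rw [intervalIntegral.integral_congr (fun r _ => this r),
        intervalIntegral.integral_const_mul, hGint]
    show (1:ℝ) - _ = _
    rw [h1, hint]
    rw [hFdef]
    congr 1
    congr 1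
    simp only [Real.exp_sub, Real.exp_neg]
    ring
  have hFpos : ∀ s ∈ Set.Icc (0:ℝ) t, 0 < F s := by
    intro s hs
    have h1 : 0 ≤ G t - G (t - s) := by
      rw [← hGint]
      apply intervalIntegral.integral_nonneg (by linarith [hs.1])
      intro r _
      exact mul_nonneg (hlam0 r) (Real.exp_pos _).le
    have : 0 < Real.exp (g t) / (1 - z) := by positivity
    have he := Real.exp_pos (-(g (t - s)))
    show 0 < Real.exp (-(g (t - s))) * (Real.exp (g t) / (1 - z) + (G t - G (t - s)))
    exact mul_pos he (by linarith)
  refine ⟨?_, ?_⟩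
  · rw [hxF 0]
    have : F 0 = (1 - z)⁻¹ := by
      rw [hFdef]
      simp [Real.exp_neg, ← Real.exp_add]
      field_simp
    rw [this, inv_inv]
    ring
  · intro s hs
    have hFne : F s ≠ 0 := ne_of_gt (hFpos s hs)
    -- derivative of F
    have hts : HasDerivAt (fun s : ℝ => t - s) (-1) s := by
      simpa using (hasDerivAt_id' s).const_sub t
    have hga : HasDerivAt (fun s : ℝ => g (t - s)) (-(mu (t - s) - lam (t - s))) s := by
      have := (hgd (t - s)).comp s hts
      simpa [mul_comm, Function.comp_def] using this
    have h2 : HasDerivAt (fun s : ℝ => Real.exp (-(g (t - s))))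
        ((mu (t - s) - lam (t - s)) * Real.exp (-(g (t - s)))) s := by
      have := (hga.neg).exp
      simpa [mul_comm] using this
    have h3 : HasDerivAt (fun s : ℝ => Real.exp (g t) / (1 - z) + (G t - G (t - s)))
        (lam (t - s) * Real.exp (g (t - s))) s := by
      have hG2 : HasDerivAt (fun s : ℝ => G (t - s))
          (-(lam (t - s) * Real.exp (g (t - s)))) s := by
        have := (hGd (t - s)).comp s hts
        simpa [mul_comm, Function.comp_def] using this
      have := ((hasDerivAt_const s (Real.exp (g t) / (1 - z))).add
        ((hasDerivAt_const s (G t)).sub hG2))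
      simpa [Pi.add_def, Pi.sub_def] using this
    have hF : HasDerivAt F ((mu (t - s) - lam (t - s)) * F s + lam (t - s)) s := by
      have hmul := h2.mul h3
      have key : Real.exp (-(g (t - s))) * Real.exp (g (t - s)) = 1 := by
        rw [← Real.exp_add]; simp
      have heq : (mu (t - s) - lam (t - s)) * Real.exp (-(g (t - s))) *
          (Real.exp (g t) / (1 - z) + (G t - G (t - s))) +
          Real.exp (-(g (t - s))) * (lam (t - s) * Real.exp (g (t - s)))
          = (mu (t - s) - lam (t - s)) * F s + lam (t - s) := by
        simp only [hFdef]
        linear_combination lam (t - s) * key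
      rw [← heq]
      exact hmul
    have hx' : HasDerivAt (fun s => 1 - (F s)⁻¹)
        (((mu (t - s) - lam (t - s)) * F s + lam (t - s)) / (F s) ^ 2) s := by
      have h := ((hasDerivAt_const s (1:ℝ)).sub (hF.inv hFne))
      replace h : HasDerivAt (fun s => 1 - (F s)⁻¹) _ s := h
      convert h using 1
      ring
    have hgoal : ((mu (t - s) - lam (t - s)) * F s + lam (t - s)) / (F s) ^ 2
        = -(lam (t - s)) * (x s * (1 - x s)) + mu (t - s) * (1 - x s) := by
      rw [hxF s]
      field_simp
      ring
    rw [← hgoal]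
    have := hx'.hasDerivWithinAt (s := Set.Icc (0:ℝ) t)
    exact this.congr (fun y _ => (hxF y)) (hxF s)
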